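/- For the asymmetric random walk with 0 < q < p, p + q = 1, let k ≥ 1 and 0 < α < α₁ < α₂ < ⋯ < α_k < 1. Then lim_{N→∞} P_{⌊αN⌋}( ∩_{i=1}^k {G(⌊α_i N⌋) ≡ 1 mod 2} ) = 1/(2 − (p − q))^k; that is, the parities at the sites ⌊α_i N⌋ converge to i.i.d. Bernoulli variables with success probability (2 − (p − q))^{−1}. -/

import Mathlib

open Filter Topology

/-- Position of the nearest-neighbor walk after the steps `w` (`true` = one step right,
`false` = one step left), started from `x`. -/
def walkPos (x : ℤ) (w : List Bool) : ℤ :=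
  x + (w.count true : ℤ) - (w.count false : ℤ)

/-- `w` is the step sequence of a trajectory on `{0, 1, …, N}` started at `x` and run
exactly until the exit time `τ_N = T_0 ∧ T_N`: all positions strictly before the last
step lie strictly inside `(0, N)`, and the final position is `0` or `N`. -/
def IsExitPath (N : ℕ) (x : ℤ) (w : List Bool) : Prop :=
  (∀ k < w.length, 0 < walkPos x (w.take k) ∧ walkPos x (w.take k) < (N : ℤ)) ∧
    (walkPos x w = 0 ∨ walkPos x w = (N : ℤ))

/-- Probability weight of the step sequence `w` when each step goes right with
probability `p` and left with probability `1 - p`, independently. -/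
noncomputable def wt (p : ℝ) (w : List Bool) : ℝ :=
  p ^ w.count true * (1 - p) ^ w.count false

/-- `prob N p x S` is the probability, for the walk on `{0, …, N}` with right-step
probability `p` started at `x` and stopped at the exit time `τ_N`, that its stopped
trajectory (recorded as the step sequence up to time `τ_N`) satisfies `S`. -/
noncomputable def prob (N : ℕ) (p : ℝ) (x : ℤ) (S : List Bool → Prop) : ℝ :=
  ∑' w : List Bool, Set.indicator {w | IsExitPath N x w ∧ S w} (wt p) w

/-- Expectation of `f` of the stopped trajectory for the walk started at `x`. -/
noncomputable def expect (N : ℕ) (p : ℝ) (x : ℤ) (f : List Bool → ℝ) : ℝ :=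
  ∑' w : List Bool, Set.indicator {w | IsExitPath N x w} (fun w => wt p w * f w) w

/-- Probability for the walk whose starting point is uniformly distributed on
`{0, 1, …, N}`; the event `S` may depend on the starting point. -/
noncomputable def probUniform (N : ℕ) (p : ℝ) (S : ℤ → List Bool → Prop) : ℝ :=
  (∑ x ∈ Finset.range (N + 1), prob N p (x : ℤ) (S (x : ℤ))) / (N + 1)

/-- The set of sites visited by the stopped walk up to time `τ_N` (time `0` included). -/
def rangeSet (x : ℤ) (w : List Bool) : Finset ℤ :=
  (Finset.range (w.length + 1)).image fun k => walkPos x (w.take k)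

/-- The range `R_N`: the number of distinct sites visited up to the exit time. -/
def rangeCount (x : ℤ) (w : List Bool) : ℕ := (rangeSet x w).card

/-- The local time `G(y) = Σ_{k=0}^{τ_N} 1_{X_k = y}` of the stopped trajectory `w`. -/
def localTime (x y : ℤ) (w : List Bool) : ℕ :=
  ((Finset.range (w.length + 1)).filter fun k => walkPos x (w.take k) = y).card

/-- The event `T_y < τ_N`: the walk started at `x` visits `y` at some time
`k ≥ 1` strictly before the end of the stopped trajectory `w`. -/
def hitsBefore (x y : ℤ) (w : List Bool) : Prop :=
  ∃ k, 1 ≤ k ∧ k < w.length ∧ walkPos x (w.take k) = y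


open scoped Classical

-- basic lemmas
@[simp] lemma walkPos_nil (x : ℤ) : walkPos x [] = x := by simp [walkPos]

lemma walkPos_cons (x : ℤ) (b : Bool) (w : List Bool) :
    walkPos x (b :: w) = walkPos (if b then x + 1 else x - 1) w := by
  cases b <;> simp [walkPos, List.count_cons] <;> ring

@[simp] lemma wt_nil (p : ℝ) : wt p [] = 1 := by simp [wt]

lemma wt_cons (p : ℝ) (b : Bool) (w : List Bool) :
    wt p (b :: w) = (if b then p else 1 - p) * wt p w := by
  cases b <;> simp [wt, List.count_cons, pow_succ] <;> ring

lemma isExitPath_nil (N : ℕ) (x : ℤ) : IsExitPath N x [] ↔ (x = 0 ∨ x = (N : ℤ)) := by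
  simp [IsExitPath]

lemma isExitPath_cons (N : ℕ) (x : ℤ) (hx0 : 0 < x) (hxN : x < (N : ℤ)) (b : Bool)
    (w : List Bool) :
    IsExitPath N x (b :: w) ↔ IsExitPath N (if b then x + 1 else x - 1) w := by
  constructor
  · rintro ⟨h1, h2⟩
    refine ⟨fun k hk => ?_, ?_⟩
    · have := h1 (k + 1) (by simpa using Nat.succ_lt_succ hk)
      simpa [List.take_succ_cons, walkPos_cons] using this
    · simpa [walkPos_cons] using h2
  · rintro ⟨h1, h2⟩
    refine ⟨fun k hk => ?_, ?_⟩
    · match k with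
      | 0 => simpa using ⟨hx0, hxN⟩
      | k + 1 =>
        have := h1 k (by simpa using Nat.lt_of_succ_lt_succ hk)
        simpa [List.take_succ_cons, walkPos_cons] using this
    · simpa [walkPos_cons] using h2

lemma isExitPath_nonempty_interior (N : ℕ) (x : ℤ) (b : Bool) (w : List Bool)
    (h : IsExitPath N x (b :: w)) : 0 < x ∧ x < (N : ℤ) := by
  have := h.1 0 (by simp)
  simpa using this

lemma localTime_nil (x y : ℤ) : localTime x y [] = if x = y then 1 else 0 := by
  simp [localTime, Finset.filter_singleton, Finset.range_one]
  split <;> simp_all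

lemma localTime_eq_sum (x y : ℤ) (w : List Bool) :
    localTime x y w = ∑ k ∈ Finset.range (w.length + 1),
      if walkPos x (w.take k) = y then 1 else 0 := by
  rw [localTime, Finset.card_filter]

lemma localTime_cons (x y : ℤ) (b : Bool) (w : List Bool) :
    localTime x y (b :: w)
      = (if x = y then 1 else 0) + localTime (if b then x + 1 else x - 1) y w := by
  rw [localTime_eq_sum, localTime_eq_sum]
  have : (b :: w).length + 1 = (w.length + 1) + 1 := by simp
  rw [this, Finset.sum_range_succ']
  simp [List.take_succ_cons, walkPos_cons]
  ring

section summ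
variable {p : ℝ} (hp0 : 0 < p) (hp1 : p < 1)

lemma wt_nonneg (hp0 : 0 < p) (hp1 : p < 1) (w : List Bool) : 0 ≤ wt p w := by
  have : (0:ℝ) ≤ 1 - p := by linarith
  exact mul_nonneg (pow_nonneg hp0.le _) (pow_nonneg this _)

lemma sum_wt_le_one (hp0 : 0 < p) (hp1 : p < 1) (N : ℕ) :
    ∀ (n : ℕ) (x : ℤ) (S : Finset (List Bool)),
      (∀ w ∈ S, IsExitPath N x w ∧ w.length ≤ n) → ∑ w ∈ S, wt p w ≤ 1 := by
  intro n
  induction n with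
  | zero =>
    intro x S hS
    have hsub : S ⊆ {[]} := by
      intro w hw
      rcases hS w hw with ⟨_, hlen⟩
      simp [List.length_eq_zero_iff.mp (Nat.le_zero.mp hlen)]
    calc ∑ w ∈ S, wt p w ≤ ∑ w ∈ ({[]} : Finset (List Bool)), wt p w :=
          Finset.sum_le_sum_of_subset_of_nonneg hsub
            (fun w _ _ => wt_nonneg hp0 hp1 w)
      _ = 1 := by simp [wt_nil]
  | succ m ih =>
    intro x S hS
    by_cases hne : ∃ w ∈ S, w ≠ []
    · obtain ⟨w₀, hw₀S, hw₀⟩ := hne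
      obtain ⟨b₀, t₀, rfl⟩ : ∃ b t, w₀ = b :: t := by
        cases w₀ with
        | nil => exact absurd rfl hw₀
        | cons b t => exact ⟨b, t, rfl⟩
      obtain ⟨hx0, hxN⟩ := isExitPath_nonempty_interior N x b₀ t₀ (hS _ hw₀S).1
      have hnil : ([] : List Bool) ∉ S := by
        intro hmem
        rcases (isExitPath_nil N x).mp (hS [] hmem).1 with h | h <;> omega
      -- split by head
      have hsplit : ∀ b : Bool,
          ∑ w ∈ S.filter (fun w => w.headI = b), wt p w
            ≤ (if b then p else 1 - p) * 1 := by
        intro b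
        set T := (S.filter (fun w => w.headI = b)).image List.tail with hT
        have himg : S.filter (fun w => w.headI = b) = T.image (b :: ·) := by
          ext w
          simp only [hT, Finset.mem_image, Finset.mem_filter]
          constructor
          · rintro ⟨hwS, hhead⟩
            cases w with
            | nil => exact absurd hwS hnil
            | cons c t =>
              simp at hhead
              exact ⟨t, ⟨⟨c :: t, ⟨hwS, by simp [hhead]⟩, rfl⟩, by rw [hhead]⟩⟩
          · rintro ⟨t, ⟨u, ⟨huS, hhu⟩, htail⟩, rfl⟩
            cases u with
            | nil => exact absurd huS hnil
            | cons c s =>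
              simp at hhu htail
              subst htail
              rw [hhu] at huS
              exact ⟨huS, by simp⟩
        have hTmem : ∀ t ∈ T, IsExitPath N (if b then x + 1 else x - 1) t ∧ t.length ≤ m := by
          intro t ht
          simp only [hT, Finset.mem_image, Finset.mem_filter] at ht
          obtain ⟨u, ⟨huS, hhu⟩, htail⟩ := ht
          cases u with
          | nil => exact absurd huS hnil
          | cons c s =>
            simp at hhu htail
            subst htail
            rw [hhu] at huS
            obtain ⟨hex, hlen⟩ := hS _ huS
            exact ⟨(isExitPath_cons N x hx0 hxN b s).mp hex, by simpa using hlen⟩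
        calc ∑ w ∈ S.filter (fun w => w.headI = b), wt p w
            = ∑ t ∈ T, wt p (b :: t) := by
              rw [himg, Finset.sum_image (by intro a _ c _ h; simpa using h)]
          _ = (if b then p else 1 - p) * ∑ t ∈ T, wt p t := by
              rw [Finset.mul_sum]; exact Finset.sum_congr rfl fun t _ => wt_cons p b t
          _ ≤ (if b then p else 1 - p) * 1 := by
              have h1 : (0:ℝ) ≤ if b then p else 1 - p := by
                cases b <;> simp <;> linarith
              exact mul_le_mul_of_nonneg_left (ih _ T hTmem) h1
      have hpart : ∑ w ∈ S, wt p w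
          = ∑ w ∈ S.filter (fun w => w.headI = true), wt p w
            + ∑ w ∈ S.filter (fun w => w.headI = false), wt p w := by
        rw [← Finset.sum_filter_add_sum_filter_not S (fun w => w.headI = true)]
        congr 1
        apply Finset.sum_congr _ (fun _ _ => rfl)
        apply Finset.filter_congr
        intro w _
        simp [Bool.not_eq_true]
      rw [hpart]
      have h1 := hsplit true
      have h2 := hsplit false
      norm_num at h1 h2
      linarith
    · push_neg at hne
      have hsub : S ⊆ {[]} := fun w hw => by simp [hne w hw]
      calc ∑ w ∈ S, wt p w ≤ ∑ w ∈ ({[]} : Finset (List Bool)), wt p w :=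
            Finset.sum_le_sum_of_subset_of_nonneg hsub (fun w _ _ => wt_nonneg hp0 hp1 w)
        _ = 1 := by simp [wt_nil]

end summ

section probl
open scoped Classical
variable {p : ℝ} (hp0 : 0 < p) (hp1 : p < 1)
include hp0 hp1

open Classical in
lemma summable_exit (N : ℕ) (x : ℤ) :
    Summable (Set.indicator {w | IsExitPath N x w} (wt p)) := by
  apply summable_of_sum_le (c := 1)
  · intro w
    exact Set.indicator_nonneg (fun w _ => wt_nonneg hp0 hp1 w) w
  · intro u
    rw [Finset.sum_indicator_eq_sum_filter]
    exact sum_wt_le_one hp0 hp1 N (u.sup List.length) x _ (by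
      intro w hw
      simp only [Finset.mem_filter] at hw
      exact ⟨hw.2, Finset.le_sup hw.1⟩)

lemma summable_event (N : ℕ) (x : ℤ) (S : List Bool → Prop) :
    Summable (Set.indicator {w | IsExitPath N x w ∧ S w} (wt p)) := by
  have hset : {w : List Bool | IsExitPath N x w ∧ S w}
      = {w | S w} ∩ {w | IsExitPath N x w} := by ext w; exact ⟨fun h => ⟨h.2, h.1⟩, fun h => ⟨h.2, h.1⟩⟩
  rw [hset, ← Set.indicator_indicator]
  exact ((summable_exit hp0 hp1 N x).indicator _)

lemma prob_nonneg (N : ℕ) (x : ℤ) (S : List Bool → Prop) : 0 ≤ prob N p x S :=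
  tsum_nonneg fun w => Set.indicator_nonneg (fun w _ => wt_nonneg hp0 hp1 w) w

open Classical in
lemma prob_le_one (N : ℕ) (x : ℤ) (S : List Bool → Prop) : prob N p x S ≤ 1 := by
  apply Summable.tsum_le_of_sum_le (summable_event hp0 hp1 N x S)
  intro u
  rw [Finset.sum_indicator_eq_sum_filter]
  exact sum_wt_le_one hp0 hp1 N (u.sup List.length) x _ (by
    intro w hw
    simp only [Finset.mem_filter, Set.mem_setOf_eq] at hw
    exact ⟨hw.2.1, Finset.le_sup hw.1⟩)

omit hp0 hp1 in
lemma prob_congr {N : ℕ} {x : ℤ} {S S' : List Bool → Prop} (h : ∀ w, S w ↔ S' w) :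
    prob N p x S = prob N p x S' := by
  unfold prob
  congr 1
  ext w
  have : ∀ w, (IsExitPath N x w ∧ S w) ↔ (IsExitPath N x w ∧ S' w) := fun w =>
    and_congr_right fun _ => h w
  congr 1
  ext w
  exact this w

omit hp0 hp1 in
lemma prob_boundary_zero (N : ℕ) (S : List Bool → Prop) :
    prob N p 0 S = if S [] then 1 else 0 := by
  unfold prob
  rw [tsum_eq_single []]
  · have hex : IsExitPath N 0 [] := (isExitPath_nil N 0).mpr (Or.inl rfl)
    rw [Set.indicator_apply]
    by_cases hS : S []
    · rw [if_pos (by exact ⟨hex, hS⟩), wt_nil, if_pos hS]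
    · rw [if_neg (by simp [hS]), if_neg hS]
  · intro w hw
    apply Set.indicator_of_notMem
    rintro ⟨hex, _⟩
    cases w with
    | nil => exact hw rfl
    | cons b t =>
      have := (isExitPath_nonempty_interior N 0 b t hex).1
      omega

omit hp0 hp1 in
lemma prob_boundary_top (N : ℕ) (S : List Bool → Prop) :
    prob N p (N : ℤ) S = if S [] then 1 else 0 := by
  unfold prob
  rw [tsum_eq_single []]
  · have hex : IsExitPath N (N : ℤ) [] := (isExitPath_nil N N).mpr (Or.inr rfl)
    rw [Set.indicator_apply]
    by_cases hS : S []
    · rw [if_pos (by exact ⟨hex, hS⟩), wt_nil, if_pos hS]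
    · rw [if_neg (by simp [hS]), if_neg hS]
  · intro w hw
    apply Set.indicator_of_notMem
    rintro ⟨hex, _⟩
    cases w with
    | nil => exact hw rfl
    | cons b t =>
      have := (isExitPath_nonempty_interior N (N : ℤ) b t hex).2
      omega

lemma prob_cons (N : ℕ) (x : ℤ) (h0 : 0 < x) (hN : x < (N : ℤ)) (S : List Bool → Prop) :
    prob N p x S = p * prob N p (x + 1) (fun w => S (true :: w))
      + (1 - p) * prob N p (x - 1) (fun w => S (false :: w)) := by
  classical
  set f := Set.indicator {w : List Bool | IsExitPath N x w ∧ S w} (wt p) with hfdef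
  have hf : Summable f := summable_event hp0 hp1 N x S
  have hnil : f [] = 0 := by
    apply Set.indicator_of_notMem
    rintro ⟨hex, _⟩
    rcases (isExitPath_nil N x).mp hex with h | h <;> omega
  have hinj : Function.Injective (fun bw : Bool × List Bool => bw.1 :: bw.2) := by
    rintro ⟨b1, t1⟩ ⟨b2, t2⟩ h
    simp only [List.cons.injEq] at h
    simp [h.1, h.2]
  have hsupp : Function.support f ⊆ Set.range (fun bw : Bool × List Bool => bw.1 :: bw.2) := by
    intro w hw
    cases w with
    | nil => exact absurd hnil hw
    | cons b t => exact ⟨(b, t), rfl⟩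
  have h1 : prob N p x S = ∑' bw : Bool × List Bool, f (bw.1 :: bw.2) :=
    (hinj.tsum_eq hsupp).symm
  have h2 : ∑' bw : Bool × List Bool, f (bw.1 :: bw.2)
      = ∑' b : Bool, ∑' w : List Bool, f (b :: w) :=
    Summable.tsum_prod (hf.comp_injective hinj)
  have hkey : ∀ (b : Bool) (w : List Bool),
      f (b :: w) = (if b then p else 1 - p) *
        Set.indicator {w : List Bool |
          IsExitPath N (if b then x + 1 else x - 1) w ∧ S (b :: w)} (wt p) w := by
    intro b w
    rw [hfdef, Set.indicator_apply, Set.indicator_apply]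
    have hiff : ((b :: w) ∈ {w : List Bool | IsExitPath N x w ∧ S w})
        ↔ (w ∈ {w : List Bool | IsExitPath N (if b then x + 1 else x - 1) w ∧ S (b :: w)}) := by
      simp only [Set.mem_setOf_eq]
      exact and_congr_left' (isExitPath_cons N x h0 hN b w)
    by_cases hmem : w ∈ {w : List Bool | IsExitPath N (if b then x + 1 else x - 1) w ∧ S (b :: w)}
    · rw [if_pos (hiff.mpr hmem), if_pos hmem, wt_cons]
    · rw [if_neg (fun h => hmem (hiff.mp h)), if_neg hmem, mul_zero]
  rw [h1, h2, tsum_bool]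
  have ht : ∑' w : List Bool, f (true :: w) = p * prob N p (x + 1) (fun w => S (true :: w)) := by
    rw [show (fun w => f (true :: w)) = fun w => p *
        Set.indicator {w : List Bool | IsExitPath N (x + 1) w ∧ S (true :: w)} (wt p) w by
      funext w; simpa using hkey true w]
    exact tsum_mul_left
  have hfa : ∑' w : List Bool, f (false :: w)
      = (1 - p) * prob N p (x - 1) (fun w => S (false :: w)) := by
    rw [show (fun w => f (false :: w)) = fun w => (1 - p) *
        Set.indicator {w : List Bool | IsExitPath N (x - 1) w ∧ S (false :: w)} (wt p) w by
      funext w; simpa using hkey false w]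
    exact tsum_mul_left
  rw [ht, hfa]
  ring

end probl

lemma harmonic_interp {p r : ℝ} (hp0 : 0 < p) (hr : r = (1 - p) / p) (hr1 : r ≠ 1)
    (g : ℤ → ℝ) (a : ℤ) (m : ℕ)
    (hg : ∀ n : ℕ, 0 < n → n < m →
      g (a + n) = p * g (a + n + 1) + (1 - p) * g (a + n - 1)) :
    ∀ n : ℕ, n ≤ m →
      g (a + n) * (r ^ m - 1) = g a * (r ^ m - r ^ n) + g (a + m) * (r ^ n - 1) := by
  have hpne : p ≠ 0 := ne_of_gt hp0
  rcases Nat.eq_zero_or_pos m with hm | hm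
  · subst hm
    intro n hn
    interval_cases n
    simp
  set B := (g (a + 1) - g a) / (r - 1) with hB
  set A := g a - B with hA
  have hrne : r - 1 ≠ 0 := sub_ne_zero.mpr hr1
  have key : ∀ n : ℕ, n ≤ m → g (a + n) = A + B * r ^ n := by
    intro n
    induction n using Nat.twoStepInduction with
    | zero =>
      intro _
      simp [hA]
    | one =>
      intro _
      have : A + B * r ^ 1 = g a + B * (r - 1) := by rw [hA]; ring
      rw [this, hB]
      field_simp
      push_cast; ring
    | more n ih1 ih2 =>
      intro hn2
      have hn1 : n + 1 < m := by omega
      have e1 := hg (n + 1) (by omega) hn1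
      have c1 : a + ((n : ℤ) + 1) + 1 = a + ((n + 2 : ℕ) : ℤ) := by push_cast; ring
      have c2 : a + ((n : ℤ) + 1) - 1 = a + (n : ℤ) := by ring
      have c3 : (((n + 1 : ℕ)) : ℤ) = (n : ℤ) + 1 := by push_cast; ring
      rw [c3] at e1
      rw [c1, c2] at e1
      have v1 : g (a + (n : ℤ)) = A + B * r ^ n := ih1 (by omega)
      have v2 : g (a + ((n : ℤ) + 1)) = A + B * r ^ (n + 1) := by
        have := ih2 (by omega)
        rwa [c3] at this
      rw [v1, v2] at e1
      -- e1 : A + B r^{n+1} = p * g(a+(n+2)) + (1-p)(A + B r^n)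
      have hsolve : g (a + ((n + 2 : ℕ) : ℤ))
          = (A + B * r ^ (n + 1) - (1 - p) * (A + B * r ^ n)) / p := by
        rw [eq_div_iff hpne]
        push_cast at e1 ⊢
        linarith [e1]
      rw [hsolve]
      have hrp : r * p = 1 - p := by rw [hr, div_mul_cancel₀ _ hpne]
      rw [div_eq_iff hpne]
      linear_combination (B * r ^ n * (1 - r)) * hrp
  intro n hn
  rw [key n hn, key m le_rfl]
  have h0 : g a = A + B := by
    have := key 0 (by omega)
    simpa using this
  rw [h0]
  ring

noncomputable def hfun (p : ℝ) (N : ℕ) {k : ℕ} (Y : Fin k → ℤ) (x : ℤ)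
    (ε : Fin k → Bool) : ℝ :=
  prob N p x fun w => ∀ i, localTime x (Y i) w % 2 = if ε i then 1 else 0

def flipAt {k : ℕ} (Y : Fin k → ℤ) (x : ℤ) (ε : Fin k → Bool) : Fin k → Bool :=
  fun i => xor (decide (Y i = x)) (ε i)

section hlem
variable {p : ℝ} (hp0 : 0 < p) (hp1 : p < 1) {k : ℕ}
include hp0 hp1

lemma hfun_nonneg (N : ℕ) (Y : Fin k → ℤ) (x : ℤ) (ε : Fin k → Bool) :
    0 ≤ hfun p N Y x ε := prob_nonneg hp0 hp1 N x _

lemma hfun_le_one (N : ℕ) (Y : Fin k → ℤ) (x : ℤ) (ε : Fin k → Bool) :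
    hfun p N Y x ε ≤ 1 := prob_le_one hp0 hp1 N x _

omit hp0 hp1 in
lemma flipAt_eq_self {Y : Fin k → ℤ} {x : ℤ} (h : ∀ i, Y i ≠ x) (ε : Fin k → Bool) :
    flipAt Y x ε = ε := by
  funext i
  simp [flipAt, h i]

lemma hfun_rec (N : ℕ) (Y : Fin k → ℤ) (x : ℤ) (h0 : 0 < x) (hN : x < (N : ℤ))
    (ε : Fin k → Bool) :
    hfun p N Y x ε = p * hfun p N Y (x + 1) (flipAt Y x ε)
      + (1 - p) * hfun p N Y (x - 1) (flipAt Y x ε) := by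
  unfold hfun
  rw [prob_cons hp0 hp1 N x h0 hN]
  congr 1
  · congr 1
    apply prob_congr
    intro w
    apply forall_congr'
    intro i
    rw [show localTime x (Y i) (true :: w)
        = (if x = Y i then 1 else 0) + localTime (x + 1) (Y i) w by
      simpa using localTime_cons x (Y i) true w]
    by_cases h : x = Y i
    · have hd : flipAt Y x ε i = !(ε i) := by
        simp [flipAt, h.symm]
      rw [if_pos h, hd]
      cases hε : ε i <;> simp <;> omega
    · have hne : Y i ≠ x := fun hh => h hh.symm
      have hd : flipAt Y x ε i = ε i := by
        simp [flipAt, hne]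
      rw [if_neg h, hd]
      simp
  · congr 1
    apply prob_congr
    intro w
    apply forall_congr'
    intro i
    rw [show localTime x (Y i) (false :: w)
        = (if x = Y i then 1 else 0) + localTime (x - 1) (Y i) w by
      simpa using localTime_cons x (Y i) false w]
    by_cases h : x = Y i
    · have hd : flipAt Y x ε i = !(ε i) := by
        simp [flipAt, h.symm]
      rw [if_pos h, hd]
      cases hε : ε i <;> simp <;> omega
    · have hne : Y i ≠ x := fun hh => h hh.symm
      have hd : flipAt Y x ε i = ε i := by
        simp [flipAt, hne]
      rw [if_neg h, hd]
      simp

lemma hfun_harmonic (N : ℕ) (Y : Fin k → ℤ) (x : ℤ) (h0 : 0 < x) (hN : x < (N : ℤ))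
    (hY : ∀ i, Y i ≠ x) (ε : Fin k → Bool) :
    hfun p N Y x ε = p * hfun p N Y (x + 1) ε + (1 - p) * hfun p N Y (x - 1) ε := by
  have := hfun_rec hp0 hp1 N Y x h0 hN ε
  rwa [flipAt_eq_self hY] at this

omit hp0 hp1 in
lemma hfun_boundary_zero (N : ℕ) (Y : Fin k → ℤ) (hY : ∀ i, 0 < Y i) (ε : Fin k → Bool) :
    hfun p N Y 0 ε = if (∀ i, ε i = false) then 1 else 0 := by
  unfold hfun
  rw [prob_boundary_zero]
  have hiff : (∀ i, localTime 0 (Y i) [] % 2 = if ε i then 1 else 0) ↔ (∀ i, ε i = false) := by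
    constructor
    · intro h i
      have := h i
      rw [localTime_nil, if_neg (by intro hh; exact absurd hh.symm (ne_of_gt (hY i)))] at this
      cases hε : ε i
      · rfl
      · rw [hε] at this; simp at this
    · intro h i
      rw [localTime_nil, if_neg (by intro hh; exact absurd hh.symm (ne_of_gt (hY i))), h i]
      simp
  by_cases hc : ∀ i, ε i = false
  · rw [if_pos (hiff.mpr hc), if_pos hc]
  · rw [if_neg (fun h => hc (hiff.mp h)), if_neg hc]

omit hp0 hp1 in
lemma hfun_boundary_top (N : ℕ) (Y : Fin k → ℤ) (hY : ∀ i, Y i < (N : ℤ))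
    (ε : Fin k → Bool) :
    hfun p N Y (N : ℤ) ε = if (∀ i, ε i = false) then 1 else 0 := by
  unfold hfun
  rw [prob_boundary_top]
  have hiff : (∀ i, localTime (N : ℤ) (Y i) [] % 2 = if ε i then 1 else 0) ↔ (∀ i, ε i = false) := by
    constructor
    · intro h i
      have := h i
      rw [localTime_nil, if_neg (by intro hh; exact absurd hh (ne_of_gt (hY i)))] at this
      cases hε : ε i
      · rfl
      · rw [hε] at this; simp at this
    · intro h i
      rw [localTime_nil, if_neg (by intro hh; exact absurd hh (ne_of_gt (hY i))), h i]
      simp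
  by_cases hc : ∀ i, ε i = false
  · rw [if_pos (hiff.mpr hc), if_pos hc]
  · rw [if_neg (fun h => hc (hiff.mp h)), if_neg hc]

lemma hfun_interp {r : ℝ} (hr : r = (1 - p) / p) (hr1 : r ≠ 1) (N : ℕ)
    (Y : Fin k → ℤ) (ε : Fin k → Bool) (a b : ℤ) (hab : a ≤ b)
    (hins : ∀ z : ℤ, a < z → z < b → (0 < z ∧ z < (N : ℤ) ∧ ∀ i, Y i ≠ z)) :
    ∀ n : ℕ, (n : ℤ) ≤ b - a →
      hfun p N Y (a + n) ε * (r ^ (b - a).toNat - 1)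
        = hfun p N Y a ε * (r ^ (b - a).toNat - r ^ n)
          + hfun p N Y b ε * (r ^ n - 1) := by
  intro n hn
  have hm : a + ((b - a).toNat : ℤ) = b := by
    have : ((b - a).toNat : ℤ) = b - a := Int.toNat_of_nonneg (by omega)
    omega
  have := harmonic_interp hp0 hr hr1 (fun z => hfun p N Y z ε) a (b - a).toNat
    (by
      intro j hj0 hjm
      have hz1 : a < a + (j : ℤ) := by omega
      have hz2 : a + (j : ℤ) < b := by omega
      obtain ⟨hz0, hzN, hzY⟩ := hins (a + (j : ℤ)) hz1 hz2
      exact hfun_harmonic hp0 hp1 N Y (a + (j : ℤ)) hz0 hzN hzY ε)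
    n (by omega)
  rw [hm] at this
  exact this

end hlem

-- definitions
def Wex {k : ℕ} (Y : Fin k → ℤ) (N : ℕ) (i : ℕ) : ℤ := if h : i < k then Y ⟨i, h⟩ else N

def loex {k : ℕ} (Y : Fin k → ℤ) (N : ℕ) (i : ℕ) : ℤ := if i = 0 then 0 else Wex Y N (i - 1)

def flipI (k : ℕ) (i : ℕ) (ε : Fin k → Bool) : Fin k → Bool :=
  fun j => if (j : ℕ) = i then !(ε j) else ε j

def gU {k : ℕ} (Y : Fin k → ℤ) (N : ℕ) (i : ℕ) : ℕ := (Wex Y N (i + 1) - Wex Y N i).toNat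
def gL {k : ℕ} (Y : Fin k → ℤ) (N : ℕ) (i : ℕ) : ℕ := (Wex Y N i - loex Y N i).toNat

noncomputable def VVf (p : ℝ) (N : ℕ) {k : ℕ} (Y : Fin k → ℤ) (i : ℕ)
    (ε : Fin k → Bool) : ℝ := hfun p N Y (Wex Y N i) ε
noncomputable def VLf (p : ℝ) (N : ℕ) {k : ℕ} (Y : Fin k → ℤ) (i : ℕ)
    (ε : Fin k → Bool) : ℝ := hfun p N Y (loex Y N i) ε

noncomputable def Acoef (p q r : ℝ) {k : ℕ} (Y : Fin k → ℤ) (N : ℕ) (i : ℕ) : ℝ :=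
  p * (r ^ gU Y N i - r) / (r ^ gU Y N i - 1)
    + q * (r ^ (gL Y N i - 1) - 1) / (r ^ gL Y N i - 1)
noncomputable def Bcoef (p r : ℝ) {k : ℕ} (Y : Fin k → ℤ) (N : ℕ) (i : ℕ) : ℝ :=
  p * (r - 1) / (r ^ gU Y N i - 1)
noncomputable def Ccoef (q r : ℝ) {k : ℕ} (Y : Fin k → ℤ) (N : ℕ) (i : ℕ) : ℝ :=
  q * (r ^ gL Y N i - r ^ (gL Y N i - 1)) / (r ^ gL Y N i - 1)

noncomputable def VstarF (c : ℝ) {k : ℕ} (i : ℕ) (ε : Fin k → Bool) : ℝ :=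
  ∏ j : Fin k, if (j : ℕ) < i then (if ε j then 0 else 1) else (if ε j then c else 1 - c)

-- VstarF lemmas
lemma VstarF_nonneg {c : ℝ} (hc0 : 0 ≤ c) (hc1 : c ≤ 1) {k : ℕ} (i : ℕ) (ε : Fin k → Bool) :
    0 ≤ VstarF c i ε :=
  Finset.prod_nonneg fun j _ => by
    split_ifs <;> linarith

lemma VstarF_le_one {c : ℝ} (hc0 : 0 ≤ c) (hc1 : c ≤ 1) {k : ℕ} (i : ℕ) (ε : Fin k → Bool) :
    VstarF c i ε ≤ 1 :=
  Finset.prod_le_one (fun j _ => by split_ifs <;> linarith)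
    (fun j _ => by split_ifs <;> linarith)

lemma VstarF_top (c : ℝ) {k : ℕ} (ε : Fin k → Bool) :
    VstarF c k ε = if (∀ i, ε i = false) then 1 else 0 := by
  unfold VstarF
  by_cases hc : ∀ i, ε i = false
  · rw [if_pos hc]
    apply Finset.prod_eq_one
    intro j _
    rw [if_pos j.isLt, hc j]
    simp
  · rw [if_neg hc]
    push_neg at hc
    obtain ⟨j, hj⟩ := hc
    apply Finset.prod_eq_zero (Finset.mem_univ j)
    rw [if_pos j.isLt, if_pos (by simpa using hj)]

lemma VstarF_rec {q : ℝ} (hq : 0 < q) (hq2 : 2 * q < 1) {k : ℕ} (i : ℕ) (hi : i < k)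
    (ε : Fin k → Bool) :
    VstarF (1 / (1 + 2 * q)) i ε
      = 2 * q * VstarF (1 / (1 + 2 * q)) i (flipI k i ε)
        + (1 - 2 * q) * VstarF (1 / (1 + 2 * q)) (i + 1) (flipI k i ε) := by
  set c := 1 / (1 + 2 * q) with hc
  have hden : (1 : ℝ) + 2 * q ≠ 0 := by linarith
  set ii : Fin k := ⟨i, hi⟩ with hii
  have hmem := Finset.mem_univ ii
  unfold VstarF
  rw [← Finset.prod_erase_mul _ _ hmem, ← Finset.prod_erase_mul _ _ hmem,
    ← Finset.prod_erase_mul _ _ hmem]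
  have hP : ∀ (thr : ℕ) (δ : Fin k → Bool), thr = i ∨ thr = i + 1 → (δ = ε ∨ δ = flipI k i ε) →
      (∏ j ∈ Finset.univ.erase ii,
        if (j : ℕ) < thr then (if δ j then 0 else 1) else (if δ j then c else 1 - c))
      = (∏ j ∈ Finset.univ.erase ii,
        if (j : ℕ) < i then (if ε j then 0 else 1) else (if ε j then c else 1 - c)) := by
    intro thr δ hthr hδ
    apply Finset.prod_congr rfl
    intro j hj
    have hjne : (j : ℕ) ≠ i := by
      intro h
      apply Finset.ne_of_mem_erase hj
      apply Fin.ext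
      simpa [hii] using h
    have hδj : δ j = ε j := by
      rcases hδ with rfl | rfl
      · rfl
      · simp [flipI, hjne]
    have hthrj : ((j : ℕ) < thr) ↔ ((j : ℕ) < i) := by
      rcases hthr with rfl | rfl
      · tauto
      · omega
    rw [hδj, if_congr hthrj rfl rfl]
  rw [hP i (flipI k i ε) (Or.inl rfl) (Or.inr rfl),
    hP (i + 1) (flipI k i ε) (Or.inr rfl) (Or.inr rfl)]
  have hfac : flipI k i ε ii = !(ε ii) := by simp [flipI, hii]
  have hlt1 : ¬((ii : ℕ) < i) := by simp [hii]
  have hlt2 : (ii : ℕ) < i + 1 := by simp [hii]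
  rw [hfac]
  set P := ∏ j ∈ Finset.univ.erase ii,
    if (j : ℕ) < i then (if ε j then 0 else 1) else (if ε j then c else 1 - c) with hPdef
  rw [if_neg hlt1, if_neg hlt1, if_pos hlt2]
  cases hε : ε ii
  · have h1 : (1 - c) = 2 * q * c := by
      rw [hc]; field_simp; ring
    simp only [Bool.not_false]
    norm_num
    linear_combination P * h1
  · have h1 : c = 2 * q * (1 - c) + (1 - 2 * q) := by
      rw [hc]; field_simp; ring
    simp only [Bool.not_true]
    norm_num
    linear_combination P * h1


section siteeq

lemma Wex_mono {k N : ℕ} {Y : Fin k → ℤ}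
    (hgap : ∀ i < k, Wex Y N i + 2 ≤ Wex Y N (i + 1))
    (a b : ℕ) (hab : a ≤ b) (hbk : b ≤ k) : Wex Y N a ≤ Wex Y N b := by
  obtain ⟨d, rfl⟩ := Nat.exists_eq_add_of_le hab
  clear hab
  induction d with
  | zero => simp
  | succ d ih =>
    have h1 : Wex Y N a ≤ Wex Y N (a + d) := ih (by omega)
    have h2 := hgap (a + d) (by omega)
    have he : a + (d + 1) = (a + d) + 1 := by omega
    rw [he]
    omega

lemma Wex_mono2 {k N : ℕ} {Y : Fin k → ℤ}
    (hgap : ∀ i < k, Wex Y N i + 2 ≤ Wex Y N (i + 1))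
    (a b : ℕ) (hab : a < b) (hbk : b ≤ k) : Wex Y N a + 2 ≤ Wex Y N b := by
  have h1 := hgap a (by omega)
  have h2 := Wex_mono hgap (a + 1) b (by omega) hbk
  omega

lemma Wex_top {k N : ℕ} {Y : Fin k → ℤ} : Wex Y N k = (N : ℤ) := dif_neg (lt_irrefl k)

lemma Wex_site {k N : ℕ} {Y : Fin k → ℤ} (j : Fin k) : Y j = Wex Y N (j : ℕ) := by
  simp [Wex, j.isLt]

lemma Wex_pos {k N : ℕ} {Y : Fin k → ℤ}
    (hgap : ∀ i < k, Wex Y N i + 2 ≤ Wex Y N (i + 1)) (h0 : 2 ≤ Wex Y N 0)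
    (j : ℕ) (hj : j ≤ k) : 0 < Wex Y N j := by
  rcases Nat.eq_zero_or_pos j with rfl | hjpos
  · omega
  · have := Wex_mono2 hgap 0 j hjpos hj
    omega

lemma Wex_ltN {k N : ℕ} {Y : Fin k → ℤ}
    (hgap : ∀ i < k, Wex Y N i + 2 ≤ Wex Y N (i + 1))
    (j : ℕ) (hj : j < k) : Wex Y N j < (N : ℤ) := by
  have h1 := Wex_mono2 hgap j k hj le_rfl
  have htop : Wex Y N k = (N : ℤ) := Wex_top
  omega

lemma site_equation {p q r : ℝ} (hp0 : 0 < p) (hp1 : p < 1) (hq1 : 1 - p = q)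
    (hr : r = (1 - p) / p) (hr0 : 0 < r) (hr1 : r < 1)
    {k : ℕ} {Y : Fin k → ℤ} {N : ℕ}
    (hgap : ∀ i < k, Wex Y N i + 2 ≤ Wex Y N (i + 1)) (h0 : 2 ≤ Wex Y N 0)
    (i : ℕ) (hi : i < k) (ε : Fin k → Bool) :
    VVf p N Y i ε
      = Acoef p q r Y N i * VVf p N Y i (flipI k i ε)
        + Bcoef p r Y N i * VVf p N Y (i + 1) (flipI k i ε)
        + Ccoef q r Y N i * VLf p N Y i (flipI k i ε) := by
  have hrne : r ≠ 1 := ne_of_lt hr1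
  set ε' := flipI k i ε with hε'
  -- step 1 : recursion at the site
  have hrec := hfun_rec hp0 hp1 N Y (Wex Y N i)
    (Wex_pos hgap h0 i (le_of_lt hi))
    (Wex_ltN hgap i hi) ε
  have hflip : flipAt Y (Wex Y N i) ε = ε' := by
    funext j
    by_cases hji : (j : ℕ) = i
    · have hYj : Y j = Wex Y N i := by rw [Wex_site (Y := Y) (N := N) j, hji]
      simp [flipAt, hε', flipI, hji, hYj]
    · have hYne : Y j ≠ Wex Y N i := by
        rw [Wex_site (Y := Y) (N := N) j]
        intro hcontra
        rcases Nat.lt_or_ge (j : ℕ) i with h | h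
        · have := Wex_mono2 hgap _ _ h (le_of_lt hi)
          omega
        · have hlt : i < (j : ℕ) := by omega
          have := Wex_mono2 hgap _ _ hlt (le_of_lt j.isLt)
          omega
      simp [flipAt, hε', flipI, hji, hYne]
  rw [hflip, hq1] at hrec
  -- gaps
  have hgU : 2 ≤ gU Y N i := by
    have := hgap i hi
    unfold gU
    omega
  have hloex_nonneg : 0 ≤ loex Y N i := by
    rcases eq_or_ne i 0 with h | h
    · simp [loex, h]
    · rw [loex, if_neg h]
      have := Wex_pos hgap h0 (i - 1) (by omega)
      omega
  have hloex_lt : loex Y N i + 2 ≤ Wex Y N i := by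
    rcases eq_or_ne i 0 with h | h
    · subst h; simp [loex]; omega
    · rw [loex, if_neg h]
      have := Wex_mono2 hgap (i - 1) i (by omega) (by omega)
      omega
  have hgL : 2 ≤ gL Y N i := by
    unfold gL
    omega
  -- nonvanishing denominators
  have hUlt : r ^ gU Y N i < 1 := pow_lt_one₀ (le_of_lt hr0) hr1 (by omega)
  have hLlt : r ^ gL Y N i < 1 := pow_lt_one₀ (le_of_lt hr0) hr1 (by omega)
  have hUne : r ^ gU Y N i - 1 ≠ 0 := by intro h; nlinarith
  have hLne : r ^ gL Y N i - 1 ≠ 0 := by intro h; nlinarith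
  -- step 2 : interpolation above the site
  have hup := hfun_interp hp0 hp1 hr hrne N Y ε' (Wex Y N i) (Wex Y N (i + 1))
    (by have := hgap i hi; omega)
    (by
      intro z hz1 hz2
      have hz0 : 0 < z := by
        have := Wex_pos hgap h0 i (le_of_lt hi)
        omega
      have hzN : z < (N : ℤ) := by
        have h2 := Wex_mono hgap (i + 1) k (by omega) le_rfl
        have htop : Wex Y N k = (N : ℤ) := Wex_top
        omega
      refine ⟨hz0, hzN, fun j => ?_⟩
      rw [Wex_site (Y := Y) (N := N) j]
      rcases Nat.lt_or_ge (j : ℕ) (i + 1) with h | h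
      · have := Wex_mono hgap (j : ℕ) i (by omega) (le_of_lt hi)
        omega
      · have := Wex_mono hgap (i + 1) (j : ℕ) h (le_of_lt j.isLt)
        omega)
    1 (by have := hgap i hi; push_cast; omega)
  have hcast1 : Wex Y N i + ((1 : ℕ) : ℤ) = Wex Y N i + 1 := by push_cast; ring
  rw [hcast1, pow_one] at hup
  have hgUdef : (Wex Y N (i + 1) - Wex Y N i).toNat = gU Y N i := rfl
  rw [hgUdef] at hup
  have hup' : hfun p N Y (Wex Y N i + 1) ε'
      = (VVf p N Y i ε' * (r ^ gU Y N i - r)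
          + VVf p N Y (i + 1) ε' * (r - 1)) / (r ^ gU Y N i - 1) := by
    rw [eq_div_iff hUne]
    exact hup
  -- step 3 : interpolation below the site
  have hdown := hfun_interp hp0 hp1 hr hrne N Y ε' (loex Y N i) (Wex Y N i)
    (by omega)
    (by
      intro z hz1 hz2
      have hz0 : 0 < z := by omega
      have hzN : z < (N : ℤ) := by
        have := Wex_ltN hgap i hi
        omega
      refine ⟨hz0, hzN, fun j => ?_⟩
      rw [Wex_site (Y := Y) (N := N) j]
      rcases Nat.lt_or_ge (j : ℕ) i with h | h
      · have hle : Wex Y N (j : ℕ) ≤ loex Y N i := by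
          rw [loex, if_neg (by omega : ¬i = 0)]
          exact Wex_mono hgap (j : ℕ) (i - 1) (by omega) (by omega)
        omega
      · have := Wex_mono hgap i (j : ℕ) h (le_of_lt j.isLt)
        omega)
    (gL Y N i - 1)
    (by unfold gL at *; omega)
  have hgLdef : (Wex Y N i - loex Y N i).toNat = gL Y N i := rfl
  rw [hgLdef] at hdown
  have hcast2 : loex Y N i + ((gL Y N i - 1 : ℕ) : ℤ) = Wex Y N i - 1 := by
    unfold gL at *
    omega
  rw [hcast2] at hdown
  have hdown' : hfun p N Y (Wex Y N i - 1) ε'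
      = (VLf p N Y i ε' * (r ^ gL Y N i - r ^ (gL Y N i - 1))
          + VVf p N Y i ε' * (r ^ (gL Y N i - 1) - 1)) / (r ^ gL Y N i - 1) := by
    rw [eq_div_iff hLne]
    exact hdown
  -- step 4 : combine
  have hVV : VVf p N Y i ε = hfun p N Y (Wex Y N i) ε := rfl
  rw [hVV, hrec, hup', hdown']
  unfold Acoef Bcoef Ccoef
  field_simp
  ring
end siteeq

lemma abs_add_five (a b c d e : ℝ) : |a + b + c + d + e| ≤ |a| + |b| + |c| + |d| + |e| := by
  calc |a + b + c + d + e| ≤ |a + b + c + d| + |e| := abs_add_le _ _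
    _ ≤ (|a + b + c| + |d|) + |e| := by
        have := abs_add_le (a + b + c) d
        linarith
    _ ≤ ((|a + b| + |c|) + |d|) + |e| := by
        have := abs_add_le (a + b) c
        linarith
    _ ≤ (((|a| + |b|) + |c|) + |d|) + |e| := by
        have := abs_add_le a b
        linarith

set_option maxHeartbeats 2000000 in
lemma abstract_main {p q : ℝ} (hq : 0 < q) (hpq : q < p) (hsum : p + q = 1)
    {k : ℕ} (hk : 0 < k) (X : ℕ → ℤ) (Y : ℕ → Fin k → ℤ)
    (HS : ∀ᶠ N in atTop, (2 ≤ Wex (Y N) N 0)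
      ∧ (∀ i < k, Wex (Y N) N i + 2 ≤ Wex (Y N) N (i + 1))
      ∧ 1 ≤ X N ∧ X N + 1 ≤ Wex (Y N) N 0)
    (HgU : ∀ i < k, Tendsto (fun N => gU (Y N) N i) atTop atTop)
    (HgL : ∀ i < k, Tendsto (fun N => gL (Y N) N i) atTop atTop)
    (HX : Tendsto (fun N => (X N).toNat) atTop atTop)
    (HW0 : Tendsto (fun N => (Wex (Y N) N 0).toNat) atTop atTop) :
    Tendsto (fun N => hfun p N (Y N) (X N) (fun _ => true)) atTop
      (𝓝 ((1 / (1 + 2 * q)) ^ k)) := by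
  have hp0 : 0 < p := lt_trans hq hpq
  have hp1 : p < 1 := by linarith
  have hq1 : 1 - p = q := by linarith
  have hq2 : 2 * q < 1 := by linarith
  set r : ℝ := q / p with hrdef
  have hr : r = (1 - p) / p := by rw [hrdef, hq1]
  have hr0 : 0 < r := div_pos hq hp0
  have hr1 : r < 1 := (div_lt_one hp0).mpr hpq
  have hpr : p * r = q := by rw [hrdef]; field_simp
  set c : ℝ := 1 / (1 + 2 * q) with hcdef
  have hc0 : 0 ≤ c := by positivity
  have hc1 : c ≤ 1 := by rw [hcdef]; rw [div_le_one (by linarith)]; linarith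
  have hpq2 : (1 : ℝ) - 2 * q = p - q := by linarith
  clear_value r c
  -- coefficient limits
  have hrpow : Tendsto (fun n : ℕ => r ^ n) atTop (𝓝 0) :=
    tendsto_pow_atTop_nhds_zero_of_lt_one (le_of_lt hr0) hr1
  have hA : ∀ i < k, Tendsto (fun N => Acoef p q r (Y N) N i) atTop (𝓝 (2 * q)) := by
    intro i hi
    have hU0 : Tendsto (fun N => r ^ gU (Y N) N i) atTop (𝓝 0) := hrpow.comp (HgU i hi)
    have hL0 : Tendsto (fun N => r ^ gL (Y N) N i) atTop (𝓝 0) := hrpow.comp (HgL i hi)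
    have hL10 : Tendsto (fun N => r ^ (gL (Y N) N i - 1)) atTop (𝓝 0) :=
      hrpow.comp ((tendsto_sub_atTop_nat 1).comp (HgL i hi))
    have ht : Tendsto (fun N => p * (r ^ gU (Y N) N i - r) / (r ^ gU (Y N) N i - 1)
        + q * (r ^ (gL (Y N) N i - 1) - 1) / (r ^ gL (Y N) N i - 1)) atTop
        (𝓝 (p * (0 - r) / (0 - 1) + q * (0 - 1) / (0 - 1))) := by
      apply Tendsto.add
      · exact Tendsto.div ((tendsto_const_nhds).mul (hU0.sub tendsto_const_nhds))
          (hU0.sub tendsto_const_nhds) (by norm_num)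
      · exact Tendsto.div ((tendsto_const_nhds).mul (hL10.sub tendsto_const_nhds))
          (hL0.sub tendsto_const_nhds) (by norm_num)
    have hval : p * (0 - r) / (0 - 1) + q * (0 - 1) / (0 - 1) = 2 * q := by
      field_simp
      linarith [hpr]
    rw [hval] at ht
    exact ht
  have hB : ∀ i < k, Tendsto (fun N => Bcoef p r (Y N) N i) atTop (𝓝 (p - q)) := by
    intro i hi
    have hU0 : Tendsto (fun N => r ^ gU (Y N) N i) atTop (𝓝 0) := hrpow.comp (HgU i hi)
    have ht : Tendsto (fun N => p * (r - 1) / (r ^ gU (Y N) N i - 1)) atTop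
        (𝓝 (p * (r - 1) / (0 - 1))) :=
      Tendsto.div tendsto_const_nhds (hU0.sub tendsto_const_nhds) (by norm_num)
    have hval : p * (r - 1) / (0 - 1) = p - q := by
      field_simp
      linarith [hpr]
    rw [hval] at ht
    exact ht
  have hC : ∀ i < k, Tendsto (fun N => Ccoef q r (Y N) N i) atTop (𝓝 0) := by
    intro i hi
    have hL0 : Tendsto (fun N => r ^ gL (Y N) N i) atTop (𝓝 0) := hrpow.comp (HgL i hi)
    have hL10 : Tendsto (fun N => r ^ (gL (Y N) N i - 1)) atTop (𝓝 0) :=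
      hrpow.comp ((tendsto_sub_atTop_nat 1).comp (HgL i hi))
    have ht : Tendsto (fun N => q * (r ^ gL (Y N) N i - r ^ (gL (Y N) N i - 1))
        / (r ^ gL (Y N) N i - 1)) atTop (𝓝 (q * (0 - 0) / (0 - 1))) :=
      Tendsto.div ((tendsto_const_nhds).mul (hL0.sub hL10)) (hL0.sub tendsto_const_nhds)
        (by norm_num)
    have hval : q * ((0 : ℝ) - 0) / (0 - 1) = 0 := by norm_num
    rw [hval] at ht
    exact ht
  -- error sum
  set ERR : ℕ → ℝ := fun N => ∑ i ∈ Finset.range k,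
    (|Acoef p q r (Y N) N i - 2 * q| + |Bcoef p r (Y N) N i - (p - q)|
      + |Ccoef q r (Y N) N i|) with hERRdef
  have hERR0 : ∀ N, 0 ≤ ERR N := fun N =>
    Finset.sum_nonneg fun i _ => by positivity
  have hERRi : ∀ N, ∀ i < k,
      |Acoef p q r (Y N) N i - 2 * q| + |Bcoef p r (Y N) N i - (p - q)|
        + |Ccoef q r (Y N) N i| ≤ ERR N := by
    intro N i hi
    exact Finset.single_le_sum (f := fun i =>
      (|Acoef p q r (Y N) N i - 2 * q| + |Bcoef p r (Y N) N i - (p - q)|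
        + |Ccoef q r (Y N) N i|)) (fun j _ => by positivity) (Finset.mem_range.mpr hi)
  have hERR : Tendsto ERR atTop (𝓝 0) := by
    rw [hERRdef]
    have : (0 : ℝ) = ∑ i ∈ Finset.range k, 0 := by simp
    rw [this]
    apply tendsto_finset_sum
    intro i hi
    have hik := Finset.mem_range.mp hi
    have h1 : Tendsto (fun N => |Acoef p q r (Y N) N i - 2 * q|) atTop (𝓝 0) := by
      have := ((hA i hik).sub (tendsto_const_nhds (x := 2 * q))).abs
      simpa using this
    have h2 : Tendsto (fun N => |Bcoef p r (Y N) N i - (p - q)|) atTop (𝓝 0) := by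
      have := ((hB i hik).sub (tendsto_const_nhds (x := p - q))).abs
      simpa using this
    have h3 : Tendsto (fun N => |Ccoef q r (Y N) N i|) atTop (𝓝 0) := by
      have := (hC i hik).abs
      simpa using this
    have := (h1.add h2).add h3
    simpa using this
  -- sup distance to the limit solution
  haveI hne_inst : Nonempty (Fin k × (Fin k → Bool)) := ⟨⟨⟨0, hk⟩, fun _ => false⟩⟩
  have hune : (Finset.univ : Finset (Fin k × (Fin k → Bool))).Nonempty := Finset.univ_nonempty
  set D : ℕ → ℝ := fun N => Finset.univ.sup' hune (fun s : Fin k × (Fin k → Bool) =>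
    2 ^ ((s.1 : ℕ)) * |VVf p N (Y N) (s.1 : ℕ) s.2 - VstarF c (s.1 : ℕ) s.2|) with hDdef
  have hDbound : ∀ (N : ℕ) (j : ℕ), j < k → ∀ ε : Fin k → Bool,
      2 ^ j * |VVf p N (Y N) j ε - VstarF c j ε| ≤ D N := by
    intro N j hj ε
    have := Finset.le_sup' (f := fun s : Fin k × (Fin k → Bool) =>
      2 ^ ((s.1 : ℕ)) * |VVf p N (Y N) (s.1 : ℕ) s.2 - VstarF c (s.1 : ℕ) s.2|)
      (Finset.mem_univ (⟨⟨j, hj⟩, ε⟩ : Fin k × (Fin k → Bool)))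
    exact this
  have hD0 : ∀ N, 0 ≤ D N := fun N =>
    le_trans (by positivity) (hDbound N 0 hk (fun _ => false))
  clear_value ERR
  have hΔ1 : ∀ (N : ℕ) (j : ℕ) (ε : Fin k → Bool),
      |VVf p N (Y N) j ε - VstarF c j ε| ≤ 1 := by
    intro N j ε
    have h1 : 0 ≤ VVf p N (Y N) j ε := hfun_nonneg hp0 hp1 N (Y N) _ ε
    have h2 : VVf p N (Y N) j ε ≤ 1 := hfun_le_one hp0 hp1 N (Y N) _ ε
    have h3 : 0 ≤ VstarF c j ε := VstarF_nonneg hc0 hc1 j ε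
    have h4 : VstarF c j ε ≤ 1 := VstarF_le_one hc0 hc1 j ε
    rw [abs_le]
    constructor <;> linarith
  have hDle : ∀ N, D N ≤ 2 ^ k := by
    intro N
    apply Finset.sup'_le
    intro s _
    have h1 := hΔ1 N (s.1 : ℕ) s.2
    have hpow : (2 : ℝ) ^ ((s.1 : ℕ)) ≤ 2 ^ k :=
      pow_le_pow_right₀ (by norm_num) (le_of_lt s.1.isLt)
    have habs : (0:ℝ) ≤ |VVf p N (Y N) (s.1 : ℕ) s.2 - VstarF c (s.1 : ℕ) s.2| := abs_nonneg _
    calc (2:ℝ) ^ ((s.1:ℕ)) * |VVf p N (Y N) (s.1 : ℕ) s.2 - VstarF c (s.1 : ℕ) s.2|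
        ≤ 2 ^ ((s.1:ℕ)) * 1 := mul_le_mul_of_nonneg_left h1 (by positivity)
      _ ≤ 2 ^ k := by rw [mul_one]; exact hpow
  clear_value D
  -- the main eventual inequality
  have hest : ∀ᶠ N in atTop, D N ≤ (1 / 2 + q) * D N + 2 ^ (k + 1) * ERR N := by
    filter_upwards [HS] with N hN
    obtain ⟨h0, hgap, hX1, hXW⟩ := hN
    have hsitelt : ∀ j : Fin k, Y N j < (N : ℤ) := fun j => by
      rw [Wex_site (Y := Y N) (N := N) j]
      exact Wex_ltN hgap _ j.isLt
    have hΔk : ∀ ε : Fin k → Bool, VVf p N (Y N) k ε - VstarF c k ε = 0 := by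
      intro ε
      have h1 : VVf p N (Y N) k ε = if (∀ i, ε i = false) then 1 else 0 := by
        unfold VVf
        rw [Wex_top]
        exact hfun_boundary_top N (Y N) hsitelt ε
      rw [h1, VstarF_top, sub_self]
    conv_lhs => rw [hDdef]
    apply Finset.sup'_le
    rintro ⟨ifin, ε⟩ -
    set i := (ifin : ℕ) with hidef
    have hi : i < k := ifin.isLt
    set ε' := flipI k i ε with hε'def
    have eq1 := site_equation hp0 hp1 hq1 hr hr0 hr1 hgap h0 i hi ε
    have eq2 := VstarF_rec hq hq2 i hi ε
    rw [← hcdef, hpq2] at eq2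
    set A := Acoef p q r (Y N) N i with hAdef
    set B := Bcoef p r (Y N) N i with hBdef
    set C := Ccoef q r (Y N) N i with hCdef
    set d1 := VVf p N (Y N) i ε' - VstarF c i ε' with hd1def
    set d2 := VVf p N (Y N) (i + 1) ε' - VstarF c (i + 1) ε' with hd2def
    set v1 := VstarF c i ε' with hv1def
    set v2 := VstarF c (i + 1) ε' with hv2def
    set vl := VLf p N (Y N) i ε' with hvldef
    have Δeq : VVf p N (Y N) i ε - VstarF c i ε
        = A * d1 + B * d2 + (A - 2 * q) * v1 + (B - (p - q)) * v2 + C * vl := by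
      rw [hd1def, hd2def, hv1def, hv2def, hvldef]
      linear_combination eq1 - eq2
    have hd1 : 2 ^ i * |d1| ≤ D N := by
      rw [hd1def, hv1def]
      exact hDbound N i hi ε'
    have hd2b : 2 ^ (i + 1) * |d2| ≤ D N := by
      rcases Nat.lt_or_ge (i + 1) k with h | h
      · exact hDbound N (i + 1) h ε'
      · have hik : i + 1 = k := by omega
        have : d2 = 0 := by rw [hd2def, hv2def, hik]; exact hΔk ε'
        rw [this]
        simpa using hD0 N
    have hv1b : |v1| ≤ 1 := by
      rw [abs_le]
      constructor
      · linarith [VstarF_nonneg hc0 hc1 i ε']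
      · exact VstarF_le_one hc0 hc1 i ε'
    have hv2b : |v2| ≤ 1 := by
      rw [abs_le]
      constructor
      · linarith [VstarF_nonneg hc0 hc1 (i + 1) ε']
      · exact VstarF_le_one hc0 hc1 (i + 1) ε'
    have hvl0 : 0 ≤ vl := by
      rw [hvldef]
      exact hfun_nonneg hp0 hp1 N (Y N) _ ε'
    have hvl1 : vl ≤ 1 := by
      rw [hvldef]
      exact hfun_le_one hp0 hp1 N (Y N) _ ε'
    have hvlb : |vl| ≤ 1 := by
      rw [abs_le]
      constructor <;> linarith
    set EA := |A - 2 * q| with hEAdef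
    set EB := |B - (p - q)| with hEBdef
    set EC := |C| with hECdef
    have hEA0 : 0 ≤ EA := abs_nonneg _
    have hEB0 : 0 ≤ EB := abs_nonneg _
    have hEC0 : 0 ≤ EC := abs_nonneg _
    have hEsum : EA + EB + EC ≤ ERR N := hERRi N i hi
    clear_value A B C d1 d2 v1 v2 vl EA EB EC
    have hAb : |A| ≤ 2 * q + EA := by
      calc |A| = |2 * q + (A - 2 * q)| := by ring_nf
        _ ≤ |2 * q| + EA := by rw [hEAdef]; exact abs_add_le _ _
        _ = 2 * q + EA := by rw [abs_of_pos (by linarith : (0:ℝ) < 2 * q)]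
    have hBb : |B| ≤ (p - q) + EB := by
      calc |B| = |(p - q) + (B - (p - q))| := by ring_nf
        _ ≤ |p - q| + EB := by rw [hEBdef]; exact abs_add_le _ _
        _ = (p - q) + EB := by rw [abs_of_pos (by linarith : (0:ℝ) < p - q)]
    have h5 := abs_add_five (A * d1) (B * d2) ((A - 2 * q) * v1) ((B - (p - q)) * v2) (C * vl)
    have hpowpos : (0 : ℝ) < 2 ^ i := by positivity
    have hpowk : (2 : ℝ) ^ i ≤ 2 ^ k := pow_le_pow_right₀ (by norm_num) (le_of_lt hi)
    have hps : (2 : ℝ) ^ (i + 1) = 2 * 2 ^ i := by ring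
    have step1 : 2 ^ i * |VVf p N (Y N) i ε - VstarF c i ε|
        ≤ |A| * (2 ^ i * |d1|) + (|B| / 2) * (2 ^ (i + 1) * |d2|)
          + 2 ^ i * (EA * |v1| + EB * |v2| + EC * |vl|) := by
      rw [Δeq]
      have := mul_le_mul_of_nonneg_left h5 (le_of_lt hpowpos)
      calc 2 ^ i * |A * d1 + B * d2 + (A - 2 * q) * v1 + (B - (p - q)) * v2 + C * vl|
          ≤ 2 ^ i * (|A * d1| + |B * d2| + |(A - 2 * q) * v1| + |(B - (p - q)) * v2| + |C * vl|) := this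
        _ = |A| * (2 ^ i * |d1|) + (|B| / 2) * (2 ^ (i + 1) * |d2|)
            + 2 ^ i * (EA * |v1| + EB * |v2| + EC * |vl|) := by
          rw [abs_mul, abs_mul, abs_mul, abs_mul, abs_mul, hps, hEAdef, hEBdef, hECdef]
          ring
    have hinner : EA * |v1| + EB * |v2| + EC * |vl| ≤ ERR N := by
      have t1 : EA * |v1| ≤ EA := by
        simpa using mul_le_of_le_one_right hEA0 hv1b
      have t2 : EB * |v2| ≤ EB := by
        simpa using mul_le_of_le_one_right hEB0 hv2b
      have t3 : EC * |vl| ≤ EC := by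
        simpa using mul_le_of_le_one_right hEC0 hvlb
      linarith
    have hm1 : |A| * (2 ^ i * |d1|) ≤ (2 * q + EA) * D N :=
      mul_le_mul hAb hd1 (by positivity) (by linarith)
    have hm2 : (|B| / 2) * (2 ^ (i + 1) * |d2|) ≤ (((p - q) + EB) / 2) * D N :=
      mul_le_mul (by linarith) hd2b (by positivity) (by linarith)
    have hm3 : 2 ^ i * (EA * |v1| + EB * |v2| + EC * |vl|) ≤ 2 ^ k * ERR N :=
      mul_le_mul hpowk hinner (by positivity) (by positivity)
    have hEAD : EA * D N ≤ EA * 2 ^ k := mul_le_mul_of_nonneg_left (hDle N) hEA0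
    have hEBD : EB * D N ≤ EB * 2 ^ k := mul_le_mul_of_nonneg_left (hDle N) hEB0
    have hEsum2 : (EA + EB) * 2 ^ k ≤ ERR N * 2 ^ k :=
      mul_le_mul_of_nonneg_right (by linarith) (by positivity)
    have hkey : 2 * q + (p - q) / 2 = 1 / 2 + q := by linarith
    have hp2 : (2 : ℝ) ^ (k + 1) = 2 * 2 ^ k := by ring
    have hDN := hD0 N
    calc 2 ^ i * |VVf p N (Y N) i ε - VstarF c i ε|
        ≤ |A| * (2 ^ i * |d1|) + (|B| / 2) * (2 ^ (i + 1) * |d2|)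
          + 2 ^ i * (EA * |v1| + EB * |v2| + EC * |vl|) := step1
      _ ≤ (2 * q + EA) * D N + (((p - q) + EB) / 2) * D N + 2 ^ k * ERR N := by
          linarith
      _ ≤ (1 / 2 + q) * D N + 2 ^ (k + 1) * ERR N := by
          have hEBD2 : (EB / 2) * D N ≤ EB * 2 ^ k := by
            have h1 : (EB / 2) * D N ≤ EB * D N :=
              mul_le_mul_of_nonneg_right (by linarith) (hD0 N)
            linarith
          have e1 : (2 * q + EA) * D N + (((p - q) + EB) / 2) * D N + 2 ^ k * ERR N
              = (2 * q + (p - q) / 2) * D N + EA * D N + (EB / 2) * D N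
                + 2 ^ k * ERR N := by ring
          have e2 : (2 * q + (p - q) / 2) * D N = (1 / 2 + q) * D N := by
            rw [hkey]
          have e3 : (2:ℝ) ^ (k + 1) * ERR N = 2 ^ k * ERR N + 2 ^ k * ERR N := by
            rw [hp2]; ring
          have h4 : EA * D N + (EB / 2) * D N ≤ ERR N * 2 ^ k := by
            have := hEsum2
            linarith
          have e4 : ERR N * 2 ^ k = 2 ^ k * ERR N := by ring
          linarith
  -- convergence of D to 0
  have hhalf : (0 : ℝ) < 1 / 2 - q := by linarith
  have hDERR : ∀ᶠ N in atTop, D N ≤ (2 ^ (k + 1) / (1 / 2 - q)) * ERR N := by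
    filter_upwards [hest] with N h
    rw [div_mul_eq_mul_div, le_div_iff₀ hhalf]
    linarith
  have hDzero : Tendsto D atTop (𝓝 0) := by
    apply squeeze_zero' (Eventually.of_forall hD0) hDERR
    have := hERR.const_mul (2 ^ (k + 1) / (1 / 2 - q))
    simpa using this
  -- convergence of the first-site value
  have hVV0 : Tendsto (fun N => VVf p N (Y N) 0 (fun _ => true)) atTop
      (𝓝 (VstarF c (k := k) 0 (fun _ => true))) := by
    have hb : ∀ N, ‖VVf p N (Y N) 0 (fun _ => true) - VstarF c (k := k) 0 (fun _ => true)‖ ≤ D N := by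
      intro N
      have := hDbound N 0 hk (fun _ => true)
      simpa using this
    have h1 := squeeze_zero_norm hb hDzero
    have h2 := h1.add (tendsto_const_nhds (x := VstarF c (k := k) 0 (fun _ => true)))
    simp only [zero_add] at h2
    convert h2 using 2 with N
    ring
  -- final interpolation between 0 and the first site
  have hfinal : ∀ᶠ N in atTop, hfun p N (Y N) (X N) (fun _ => true)
      = VVf p N (Y N) 0 (fun _ => true)
        * ((r ^ (X N).toNat - 1) / (r ^ (Wex (Y N) N 0).toNat - 1)) := by
    filter_upwards [HS] with N hN
    obtain ⟨h0, hgap, hX1, hXW⟩ := hN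
    have hsitepos : ∀ j : Fin k, 0 < Y N j := fun j => by
      rw [Wex_site (Y := Y N) (N := N) j]
      exact Wex_pos hgap h0 _ (le_of_lt j.isLt)
    have hz : hfun p N (Y N) 0 (fun _ => true) = 0 := by
      rw [hfun_boundary_zero N (Y N) hsitepos]
      rw [if_neg]
      push_neg
      exact ⟨⟨0, hk⟩, by simp⟩
    have hW0N : Wex (Y N) N 0 ≤ (N : ℤ) := by
      have h1 := Wex_mono hgap 0 k (by omega) le_rfl
      have h2 : Wex (Y N) N k = (N : ℤ) := Wex_top
      omega
    have hint := hfun_interp hp0 hp1 hr (ne_of_lt hr1) N (Y N) (fun _ => true)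
      0 (Wex (Y N) N 0) (by omega)
      (by
        intro z hz1 hz2
        refine ⟨hz1, by omega, fun j => ?_⟩
        rw [Wex_site (Y := Y N) (N := N) j]
        have := Wex_mono hgap 0 (j : ℕ) (by omega) (le_of_lt j.isLt)
        omega)
      (X N).toNat (by omega)
    have hxc : (0 : ℤ) + ((X N).toNat : ℤ) = X N := by omega
    have hsz : Wex (Y N) N 0 - 0 = Wex (Y N) N 0 := sub_zero _
    rw [hxc, hsz, hz] at hint
    have hm2 : 2 ≤ (Wex (Y N) N 0).toNat := by omega
    have hmlt : r ^ (Wex (Y N) N 0).toNat < 1 := pow_lt_one₀ (le_of_lt hr0) hr1 (by omega)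
    have hmne : r ^ (Wex (Y N) N 0).toNat - 1 ≠ 0 := by intro hcon; nlinarith
    rw [mul_div_assoc', eq_div_iff hmne]
    have hb : hfun p N (Y N) (Wex (Y N) N 0) (fun _ => true)
        = VVf p N (Y N) 0 (fun _ => true) := rfl
    rw [hb] at hint
    linear_combination hint
  have hφ : Tendsto (fun N => (r ^ (X N).toNat - 1) / (r ^ (Wex (Y N) N 0).toNat - 1))
      atTop (𝓝 1) := by
    have h1 : Tendsto (fun N => r ^ (X N).toNat - 1) atTop (𝓝 (0 - 1)) :=
      (hrpow.comp HX).sub tendsto_const_nhds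
    have h2 : Tendsto (fun N => r ^ (Wex (Y N) N 0).toNat - 1) atTop (𝓝 (0 - 1)) :=
      (hrpow.comp HW0).sub tendsto_const_nhds
    have := h1.div h2 (by norm_num)
    rw [show ((0:ℝ) - 1) / (0 - 1) = 1 by norm_num] at this
    exact this
  have hVs : VstarF c (k := k) 0 (fun _ => true) = c ^ k := by
    unfold VstarF
    calc (∏ j : Fin k, if ((j : ℕ) < 0) then (if (fun _ : Fin k => true) j then 0 else 1)
          else (if (fun _ : Fin k => true) j then c else 1 - c))
        = ∏ _j : Fin k, c := Finset.prod_congr rfl fun j _ => by simp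
      _ = c ^ k := by rw [Finset.prod_const, Finset.card_univ, Fintype.card_fin]
  have hlim := hVV0.mul hφ
  rw [hVs] at hlim
  have : Tendsto (fun N => VVf p N (Y N) 0 (fun _ => true)
      * ((r ^ (X N).toNat - 1) / (r ^ (Wex (Y N) N 0).toNat - 1))) atTop (𝓝 (c ^ k)) := by
    simpa using hlim
  exact Tendsto.congr' (EventuallyEq.symm hfinal) this

lemma floor_gap {β γ : ℝ} (h : β < γ) (c : ℕ) :
    ∀ᶠ N : ℕ in atTop, ⌊β * (N : ℝ)⌋ + (c : ℤ) ≤ ⌊γ * (N : ℝ)⌋ := by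
  have hδ : (0 : ℝ) < γ - β := by linarith
  have ht : Tendsto (fun N : ℕ => (γ - β) * (N : ℝ)) atTop atTop :=
    (tendsto_natCast_atTop_atTop (R := ℝ)).const_mul_atTop hδ
  filter_upwards [ht.eventually_ge_atTop ((c : ℝ) + 1)] with N hN
  have h1 : β * (N : ℝ) + (((c : ℤ) + 1 : ℤ) : ℝ) ≤ γ * (N : ℝ) := by push_cast; linarith
  have h2 := Int.floor_mono h1
  rw [Int.floor_add_intCast] at h2
  omega

lemma floor_gap_top {β : ℝ} (h : β < 1) (c : ℕ) :
    ∀ᶠ N : ℕ in atTop, ⌊β * (N : ℝ)⌋ + (c : ℤ) ≤ (N : ℤ) := by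
  filter_upwards [floor_gap h c] with N hN
  rw [one_mul, Int.floor_natCast] at hN
  exact hN

lemma floor_gap_bot {γ : ℝ} (h : 0 < γ) (c : ℕ) :
    ∀ᶠ N : ℕ in atTop, (c : ℤ) ≤ ⌊γ * (N : ℝ)⌋ := by
  filter_upwards [floor_gap (β := 0) h c] with N hN
  rw [zero_mul, Int.floor_zero] at hN
  omega

lemma toNat_tendsto {f : ℕ → ℤ} (h : ∀ b : ℕ, ∀ᶠ N in atTop, (b : ℤ) ≤ f N) :
    Tendsto (fun N => (f N).toNat) atTop atTop := by
  rw [tendsto_atTop]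
  intro b
  filter_upwards [h b] with N hN
  omega

/-- Proposition 4.2: for the asymmetric walk with fixed `0 < q < p`, `p + q = 1`,
started at `⌊αN⌋` with `α < α_1 < ⋯ < α_k`, the probability that every site `⌊α_i N⌋`
is visited an odd number of times before exit tends to `(2 - (p - q))^{-k}`. -/
theorem parity_iid_asymmetric (p q : ℝ) (hq : 0 < q) (hpq : q < p) (hsum : p + q = 1)
    (k : ℕ) (hk : 1 ≤ k) (α : ℝ) (a : Fin k → ℝ) (hmono : StrictMono a)
    (hα0 : 0 < α) (hαa : ∀ i, α < a i) (ha1 : ∀ i, a i < 1) :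
    Tendsto (fun N : ℕ =>
        prob N p ⌊α * (N : ℝ)⌋
          fun w => ∀ i, localTime ⌊α * (N : ℝ)⌋ ⌊a i * (N : ℝ)⌋ w % 2 = 1)
      atTop (𝓝 (1 / (2 - (p - q)) ^ k)) := by
  have hk0 : 0 < k := hk
  set X : ℕ → ℤ := fun N => ⌊α * (N : ℝ)⌋ with hXdef
  set Ys : ℕ → Fin k → ℤ := fun N i => ⌊a i * (N : ℝ)⌋ with hYdef
  have hWex : ∀ (N i : ℕ) (hik : i < k), Wex (Ys N) N i = ⌊a ⟨i, hik⟩ * (N : ℝ)⌋ :=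
    fun N i hik => dif_pos hik
  have hWexTop : ∀ N : ℕ, Wex (Ys N) N k = (N : ℤ) := fun N => dif_neg (lt_irrefl k)
  have ha0pos : 0 < a ⟨0, hk0⟩ := lt_trans hα0 (hαa _)
  -- gap eventualities, one for each i < k, together
  have hgapEv : ∀ c : ℕ, ∀ᶠ N in atTop, ∀ i < k,
      Wex (Ys N) N i + (c : ℤ) ≤ Wex (Ys N) N (i + 1) := by
    intro c
    rw [show (∀ᶠ N in atTop, ∀ i < k, Wex (Ys N) N i + (c : ℤ) ≤ Wex (Ys N) N (i + 1))
        = ∀ᶠ N in atTop, ∀ i ∈ Finset.range k,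
          Wex (Ys N) N i + (c : ℤ) ≤ Wex (Ys N) N (i + 1) by
      simp [Finset.mem_range]]
    rw [Filter.eventually_all_finset]
    intro i hi
    have hik : i < k := Finset.mem_range.mp hi
    rcases Nat.lt_or_ge (i + 1) k with h1 | h1
    · have hlt : a ⟨i, hik⟩ < a ⟨i + 1, h1⟩ := hmono (by simp [Fin.mk_lt_mk])
      filter_upwards [floor_gap hlt c] with N hN
      rw [hWex N i hik, hWex N (i + 1) h1]
      exact hN
    · have hik1 : i + 1 = k := by omega
      filter_upwards [floor_gap_top (ha1 ⟨i, hik⟩) c] with N hN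
      rw [hWex N i hik, hik1, hWexTop N]
      exact hN
  have HS : ∀ᶠ N in atTop, (2 ≤ Wex (Ys N) N 0)
      ∧ (∀ i < k, Wex (Ys N) N i + 2 ≤ Wex (Ys N) N (i + 1))
      ∧ 1 ≤ X N ∧ X N + 1 ≤ Wex (Ys N) N 0 := by
    filter_upwards [floor_gap_bot ha0pos 2, hgapEv 2, floor_gap_bot hα0 1,
      floor_gap (hαa ⟨0, hk0⟩) 1] with N h1 h2 h3 h4
    refine ⟨?_, by exact_mod_cast h2, by exact_mod_cast h3, ?_⟩
    · rw [hWex N 0 hk0]; exact_mod_cast h1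
    · rw [hWex N 0 hk0]; exact_mod_cast h4
  have HgU : ∀ i < k, Tendsto (fun N => gU (Ys N) N i) atTop atTop := by
    intro i hik
    apply toNat_tendsto
    intro b
    filter_upwards [hgapEv b] with N hN
    have := hN i hik
    omega
  have HgL : ∀ i < k, Tendsto (fun N => gL (Ys N) N i) atTop atTop := by
    intro i hik
    apply toNat_tendsto
    intro b
    rcases Nat.eq_zero_or_pos i with rfl | hipos
    · filter_upwards [floor_gap_bot ha0pos b] with N hN
      have hlo : loex (Ys N) N 0 = 0 := if_pos rfl
      have hw := hWex N 0 hk0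
      omega
    · have hi1 : i - 1 < k := by omega
      have hlt : a ⟨i - 1, hi1⟩ < a ⟨i, hik⟩ := hmono (Fin.mk_lt_mk.mpr (by omega))
      filter_upwards [floor_gap hlt b] with N hN
      have hlo : loex (Ys N) N i = Wex (Ys N) N (i - 1) := if_neg (by omega)
      have hw1 := hWex N (i - 1) hi1
      have hw2 := hWex N i hik
      omega
  have HX : Tendsto (fun N => (X N).toNat) atTop atTop := by
    apply toNat_tendsto
    intro b
    filter_upwards [floor_gap_bot hα0 b] with N hN
    exact hN
  have HW0 : Tendsto (fun N => (Wex (Ys N) N 0).toNat) atTop atTop := by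
    apply toNat_tendsto
    intro b
    filter_upwards [floor_gap_bot ha0pos b] with N hN
    have hw := hWex N 0 hk0
    omega
  have key := abstract_main hq hpq hsum hk0 X Ys HS HgU HgL HX HW0
  have hconst : ((1 : ℝ) / (1 + 2 * q)) ^ k = 1 / (2 - (p - q)) ^ k := by
    have h2 : 2 - (p - q) = 1 + 2 * q := by linarith
    rw [h2, div_pow, one_pow]
  rw [hconst] at key
  refine key.congr ?_
  intro N
  unfold hfun
  apply prob_congr
  intro w
  constructor
  · intro h i
    simpa using h i
  · intro h i
    simpa using h i
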